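/- arXiv:1307.7752 — 2 statements merged into one kernel-verified Lean document; each statement's English description precedes it below -/
import Mathlib

section
/- Let p be a point of the unit sphere S² in EuclideanSpace ℝ (Fin 3), let e₀ = (1,0,0) and e₂ = (0,0,1), and consider the tangential gradients a = e₀ − ⟪e₀,p⟫•p and b = e₂ − ⟪e₂,p⟫•p of the two orthogonal height functions f(x)=x₀ and g(x)=x₂ at p. Then a and b are linearly dependent (there exists λ ∈ ℝ with a = λ•b or b = λ•a) if and only if the middle coordinate of p vanishes, p 1 = 0. Hence the Jacobi set of f and g on S² is exactly the great circle {p ∈ S² : p 1 = 0}. -/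
open scoped RealInnerProductSpace

/-- The Jacobi set of the two orthogonal height functions `f(x) = x 0` and `g(x) = x 2`
on the unit sphere in `EuclideanSpace ℝ (Fin 3)` is the great circle `{p | p 1 = 0}`:
the tangential gradients `e₀ - ⟪e₀,p⟫ • p` and `e₂ - ⟪e₂,p⟫ • p` are linearly dependent
iff the middle coordinate of `p` vanishes. -/
theorem jacobi_set_of_orthogonal_height_functions_on_sphere
    (p : EuclideanSpace ℝ (Fin 3))
    (hp : p ∈ Metric.sphere (0 : EuclideanSpace ℝ (Fin 3)) 1) :
    (∃ lam : ℝ,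
        (EuclideanSpace.single (0 : Fin 3) (1 : ℝ)
            - ⟪EuclideanSpace.single (0 : Fin 3) (1 : ℝ), p⟫ • p)
          = lam • (EuclideanSpace.single (2 : Fin 3) (1 : ℝ)
            - ⟪EuclideanSpace.single (2 : Fin 3) (1 : ℝ), p⟫ • p) ∨
        (EuclideanSpace.single (2 : Fin 3) (1 : ℝ)
            - ⟪EuclideanSpace.single (2 : Fin 3) (1 : ℝ), p⟫ • p)
          = lam • (EuclideanSpace.single (0 : Fin 3) (1 : ℝ)
            - ⟪EuclideanSpace.single (0 : Fin 3) (1 : ℝ), p⟫ • p)) ↔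
      p 1 = 0 := by
  have hnorm : ‖p‖ = 1 := by simpa using hp
  have hsum : p 0 * p 0 + p 1 * p 1 + p 2 * p 2 = 1 := by
    have h1 : ⟪p, p⟫ = 1 := by
      rw [real_inner_self_eq_norm_sq, hnorm]; norm_num
    simp only [PiLp.inner_apply, Fin.sum_univ_three, RCLike.inner_apply, conj_trivial] at h1
    linear_combination h1
  have hi0 : ⟪EuclideanSpace.single (0 : Fin 3) (1 : ℝ), p⟫ = p 0 := by
    simp [EuclideanSpace.inner_single_left]
  have hi2 : ⟪EuclideanSpace.single (2 : Fin 3) (1 : ℝ), p⟫ = p 2 := by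
    simp [EuclideanSpace.inner_single_left]
  rw [hi0, hi2]
  constructor
  · rintro ⟨lam, h | h⟩
    · have h0 := congrArg (fun v => v 0) h
      have h1 := congrArg (fun v => v 1) h
      simp [EuclideanSpace.single_apply] at h0 h1
      by_contra hne
      have hp0 : p 0 = lam * p 2 :=
        mul_right_cancel₀ hne (by linear_combination h1)
      exact absurd (by linear_combination h0 + p 0 * hp0 : (1:ℝ) = 0) one_ne_zero
    · have h2 := congrArg (fun v => v 2) h
      have h1 := congrArg (fun v => v 1) h
      simp [EuclideanSpace.single_apply] at h2 h1
      by_contra hne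
      have hp2 : p 2 = lam * p 0 :=
        mul_right_cancel₀ hne (by linear_combination h1)
      exact absurd (by linear_combination h2 + p 2 * hp2 : (1:ℝ) = 0) one_ne_zero
  · intro h1
    by_cases hp0 : p 0 = 0
    · refine ⟨0, Or.inr ?_⟩
      ext i
      fin_cases i <;> simp [EuclideanSpace.single_apply, h1, hp0] <;> nlinarith
    · refine ⟨-(p 2) / p 0, Or.inl ?_⟩
      ext i
      fin_cases i <;> simp [EuclideanSpace.single_apply, h1] <;> field_simp <;>
        [linear_combination (-1) * hsum + p 1 * h1;
         linear_combination (-(p 2)) * hsum + p 2 * p 1 * h1]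
end

section
/- Let f : ℝ → ℝ be twice continuously differentiable (ContDiff ℝ 2) and periodic with period 1, and suppose every critical point of f is nondegenerate, i.e. deriv f x = 0 implies deriv (deriv f) x ≠ 0. Then the sets A = {x ∈ [0,1) : deriv f x = 0 ∧ deriv (deriv f) x < 0} (local maxima) and B = {x ∈ [0,1) : deriv f x = 0 ∧ deriv (deriv f) x > 0} (local minima) are finite and have the same cardinality. That is, a Morse function on the circle has equally many maxima and minima, so its restricted critical points occur in pairs. -/
open Set Filter Topology

/-- Zeros of a differentiable function with nondegenerate zeros are finite on a
compact interval. -/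
private lemma zeros_finite_aux {g : ℝ → ℝ} (hgd : Differentiable ℝ g)
    (hm : ∀ z, g z = 0 → deriv g z ≠ 0) (a b : ℝ) :
    {y ∈ Set.Icc a b | g y = 0}.Finite := by
  by_contra hinf
  rw [← Set.not_infinite, not_not] at hinf
  obtain ⟨z, hzK, hz⟩ := hinf.exists_accPt_of_subset_isCompact isCompact_Icc
    (fun y hy => hy.1)
  rw [accPt_iff_nhds] at hz
  have hgz : g z = 0 := by
    have hcl : z ∈ closure {y | g y = 0} := by
      rw [mem_closure_iff_nhds]
      intro U hU
      obtain ⟨y, hy, -⟩ := hz U hU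
      exact ⟨y, hy.1, hy.2.2⟩
    have hcls : IsClosed {y | g y = 0} := isClosed_eq hgd.continuous continuous_const
    have hmem : z ∈ {y | g y = 0} := by rw [← hcls.closure_eq]; exact hcl
    exact hmem
  have hiso : ∀ᶠ y in 𝓝[≠] z, g y ≠ 0 := by
    have ht : Tendsto (slope g z) (𝓝[≠] z) (𝓝 (deriv g z)) :=
      hasDerivAt_iff_tendsto_slope.mp (hgd z).hasDerivAt
    filter_upwards [ht.eventually_ne (hm z hgz), self_mem_nhdsWithin] with y hy hyz
    intro h0
    apply hy
    simp [slope_def_field, h0, hgz]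
  rw [eventually_nhdsWithin_iff] at hiso
  obtain ⟨U, hU, hUsub⟩ := eventually_iff_exists_mem.mp hiso
  obtain ⟨y, hy, hyz⟩ := hz U hU
  exact hUsub y hy.1 hyz hy.2.2

/-- Key counting inequality: there are at most as many maxima as minima. -/
private lemma key_le (f : ℝ → ℝ) (hf : ContDiff ℝ 2 f) (hper : Function.Periodic f 1)
    (hmorse : ∀ x : ℝ, deriv f x = 0 → deriv (deriv f) x ≠ 0) :
    {x ∈ Set.Ico (0 : ℝ) 1 | deriv f x = 0 ∧ deriv (deriv f) x < 0}.ncard ≤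
    {x ∈ Set.Ico (0 : ℝ) 1 | deriv f x = 0 ∧ deriv (deriv f) x > 0}.ncard := by
  set g := deriv f with hg
  have hg1 : ContDiff ℝ 1 g := by
    have h2 := contDiff_succ_iff_deriv (n := 1) (f := f)
    norm_num at h2
    exact (h2.mp hf).2
  have hgd : Differentiable ℝ g := hg1.differentiable one_ne_zero
  have hgc : Continuous g := hgd.continuous
  have hgper : Function.Periodic g 1 := by
    intro x
    have hfeq : (fun y => f (y + 1)) = f := funext fun y => hper y
    calc g (x + 1) = deriv (fun y => f (y + 1)) x := (deriv_comp_add_const f 1 x).symm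
      _ = g x := by rw [hfeq]
  have hg'per : Function.Periodic (deriv g) 1 := by
    intro x
    have hgeq : (fun y => g (y + 1)) = g := funext fun y => hgper y
    calc deriv g (x + 1) = deriv (fun y => g (y + 1)) x := (deriv_comp_add_const g 1 x).symm
      _ = deriv g x := by rw [hgeq]
  set A := {x ∈ Set.Ico (0 : ℝ) 1 | g x = 0 ∧ deriv g x < 0} with hA
  set B := {x ∈ Set.Ico (0 : ℝ) 1 | g x = 0 ∧ deriv g x > 0} with hB
  have hBfin : B.Finite := by
    apply (zeros_finite_aux hgd hmorse 0 1).subset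
    rintro x ⟨hx, hx0, -⟩
    exact ⟨⟨hx.1, hx.2.le⟩, hx0⟩
  set next : ℝ → ℝ := fun x => sInf {y ∈ Set.Ioc x (x + 1) | g y = 0} with hnext
  have main : ∀ x ∈ A, g (next x) = 0 ∧ x < next x ∧ next x ≤ x + 1 ∧
      deriv g (next x) > 0 ∧ ∀ y ∈ Set.Ioo x (next x), g y ≠ 0 := by
    rintro x ⟨hxI, hx0, hx2⟩
    set T := {y ∈ Set.Ioc x (x + 1) | g y = 0} with hT
    have hTfin : T.Finite := by
      apply (zeros_finite_aux hgd hmorse x (x + 1)).subset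
      rintro y ⟨hy, hy0⟩
      exact ⟨⟨hy.1.le, hy.2⟩, hy0⟩
    have hTne : T.Nonempty := ⟨x + 1, ⟨lt_add_one x, le_rfl⟩, (hgper x).trans hx0⟩
    have htT : next x ∈ T := hTne.csInf_mem hTfin
    have htle : ∀ y ∈ T, next x ≤ y := fun y hy => csInf_le hTfin.bddBelow hy
    obtain ⟨⟨hxt, htx1⟩, ht0⟩ := htT
    have hnz : ∀ y ∈ Set.Ioo x (next x), g y ≠ 0 := by
      rintro y ⟨hy1, hy2⟩ h0
      exact absurd (htle y ⟨⟨hy1, hy2.le.trans htx1⟩, h0⟩) (not_le.mpr hy2)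
    have hright : ∀ᶠ y in 𝓝[>] x, g y < 0 := by
      have ht : Tendsto (slope g x) (𝓝[>] x) (𝓝 (deriv g x)) :=
        (hasDerivAt_iff_tendsto_slope.mp (hgd x).hasDerivAt).mono_left
          (nhdsWithin_mono x fun y hy => ne_of_gt hy)
      filter_upwards [ht.eventually (gt_mem_nhds hx2), self_mem_nhdsWithin] with y hy hyx
      rw [slope_def_field, hx0, sub_zero] at hy
      rcases div_neg_iff.mp hy with ⟨h1, h2⟩ | ⟨h1, h2⟩
      · have := mem_Ioi.mp hyx; linarith
      · exact h1
    have hneg : ∀ y ∈ Set.Ioo x (next x), g y < 0 := by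
      rintro y ⟨hy1, hy2⟩
      rcases lt_trichotomy (g y) 0 with h | h | h
      · exact h
      · exact absurd h (hnz y ⟨hy1, hy2⟩)
      · have hev : ∀ᶠ z in 𝓝[>] x, g z < 0 ∧ z < y := by
          filter_upwards [hright, Ioo_mem_nhdsGT_of_mem ⟨le_rfl, hy1⟩] with z h1 h2
          exact ⟨h1, h2.2⟩
        obtain ⟨y₁, ⟨hy₁neg, hy₁lt⟩, hy₁x⟩ := (hev.and self_mem_nhdsWithin).exists
        obtain ⟨z, hzmem, hz0⟩ := intermediate_value_Icc hy₁lt.le hgc.continuousOn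
          (show (0:ℝ) ∈ Set.Icc (g y₁) (g y) from ⟨hy₁neg.le, h.le⟩)
        exact absurd hz0 (hnz z ⟨lt_of_lt_of_le (mem_Ioi.mp hy₁x) hzmem.1,
          lt_of_le_of_lt hzmem.2 hy2⟩)
    have hd : deriv g (next x) > 0 := by
      have hge : 0 ≤ deriv g (next x) := by
        have ht : Tendsto (slope g (next x)) (𝓝[<] (next x)) (𝓝 (deriv g (next x))) :=
          (hasDerivAt_iff_tendsto_slope.mp (hgd _).hasDerivAt).mono_left
            (nhdsWithin_mono _ fun y hy => ne_of_lt hy)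
        refine ge_of_tendsto ht ?_
        filter_upwards [Ioo_mem_nhdsLT_of_mem ⟨hxt, le_rfl⟩] with y hy
        rw [slope_def_field, ht0, sub_zero]
        exact le_of_lt (div_pos_iff.mpr (Or.inr ⟨hneg y hy, sub_neg.mpr hy.2⟩))
      exact lt_of_le_of_ne hge (Ne.symm (hmorse _ ht0))
    exact ⟨ht0, hxt, htx1, hd, hnz⟩
  set φ : ℝ → ℝ := fun x => if next x < 1 then next x else next x - 1 with hφ
  have hmaps : ∀ x ∈ A, φ x ∈ B := by
    intro x hxA
    obtain ⟨ht0, hxt, htx1, hd, -⟩ := main x hxA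
    obtain ⟨⟨hx0, hx1⟩, -, -⟩ := hxA
    by_cases hc : next x < 1
    · have : φ x = next x := if_pos hc
      rw [this]
      exact ⟨⟨le_of_lt (lt_of_le_of_lt hx0 hxt), hc⟩, ht0, hd⟩
    · push_neg at hc
      have heq : φ x = next x - 1 := if_neg (not_lt.mpr hc)
      rw [heq]
      have h2 : g (next x - 1) = 0 := by
        have hp := hgper (next x - 1); rw [sub_add_cancel] at hp; rw [← hp]; exact ht0
      have h3 : deriv g (next x - 1) > 0 := by
        have hp := hg'per (next x - 1); rw [sub_add_cancel] at hp; rw [← hp]; exact hd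
      exact ⟨⟨by linarith, by linarith⟩, h2, h3⟩
  have hinj : Set.InjOn φ A := by
    intro x hxA x' hx'A heq
    obtain ⟨ht0, hxt, htx1, -, hnz⟩ := main x hxA
    obtain ⟨ht0', hxt', htx1', -, hnz'⟩ := main x' hx'A
    obtain ⟨⟨hx0, hx1⟩, hgx, -⟩ := hxA
    obtain ⟨⟨hx0', hx1'⟩, hgx', -⟩ := hx'A
    simp only [hφ] at heq
    have hcases : next x = next x' ∨ next x = next x' + 1 ∨ next x' = next x + 1 := by
      by_cases c1 : next x < 1 <;> by_cases c2 : next x' < 1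
      · rw [if_pos c1, if_pos c2] at heq; left; exact heq
      · rw [if_pos c1, if_neg c2] at heq; push_neg at c2; right; right; linarith
      · rw [if_neg c1, if_pos c2] at heq; push_neg at c1; right; left; linarith
      · rw [if_neg c1, if_neg c2] at heq; left; linarith
    rcases hcases with h | h | h
    · rcases lt_trichotomy x x' with hlt | heq' | hlt
      · exact absurd hgx' (hnz x' ⟨hlt, h ▸ hxt'⟩)
      · exact heq'
      · exact absurd hgx (hnz' x ⟨hlt, h.symm ▸ hxt⟩)
    · have hz1 : g (x' + 1) = 0 := (hgper x').trans hgx'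
      have hmem : x' + 1 ∈ Set.Ioo x (next x) := ⟨by linarith, by rw [h]; linarith⟩
      exact absurd hz1 (hnz _ hmem)
    · have hz1 : g (x + 1) = 0 := (hgper x).trans hgx
      have hmem : x + 1 ∈ Set.Ioo x' (next x') := ⟨by linarith, by rw [h]; linarith⟩
      exact absurd hz1 (hnz' _ hmem)
  exact Set.ncard_le_ncard_of_injOn φ hmaps hinj hBfin

/-- A Morse function on the circle (a twice continuously differentiable `1`-periodic
function all of whose critical points are nondegenerate) has finitely many maxima and
minima in a fundamental domain `[0,1)`, and equally many of each. -/
theorem morse_function_on_circle_equal_maxima_minima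
    (f : ℝ → ℝ) (hf : ContDiff ℝ 2 f) (hper : Function.Periodic f 1)
    (hmorse : ∀ x : ℝ, deriv f x = 0 → deriv (deriv f) x ≠ 0) :
    {x ∈ Set.Ico (0 : ℝ) 1 | deriv f x = 0 ∧ deriv (deriv f) x < 0}.Finite ∧
    {x ∈ Set.Ico (0 : ℝ) 1 | deriv f x = 0 ∧ deriv (deriv f) x > 0}.Finite ∧
    {x ∈ Set.Ico (0 : ℝ) 1 | deriv f x = 0 ∧ deriv (deriv f) x < 0}.ncard =
      {x ∈ Set.Ico (0 : ℝ) 1 | deriv f x = 0 ∧ deriv (deriv f) x > 0}.ncard := by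
  have hg1 : ContDiff ℝ 1 (deriv f) := by
    have h2 := contDiff_succ_iff_deriv (n := 1) (f := f)
    norm_num at h2
    exact (h2.mp hf).2
  have hgd : Differentiable ℝ (deriv f) := hg1.differentiable one_ne_zero
  have hfin : {y ∈ Set.Icc (0:ℝ) 1 | deriv f y = 0}.Finite :=
    zeros_finite_aux hgd hmorse 0 1
  have hAfin : {x ∈ Set.Ico (0 : ℝ) 1 | deriv f x = 0 ∧ deriv (deriv f) x < 0}.Finite :=
    hfin.subset (by rintro x ⟨hx, hx0, -⟩; exact ⟨⟨hx.1, hx.2.le⟩, hx0⟩)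
  have hBfin : {x ∈ Set.Ico (0 : ℝ) 1 | deriv f x = 0 ∧ deriv (deriv f) x > 0}.Finite :=
    hfin.subset (by rintro x ⟨hx, hx0, -⟩; exact ⟨⟨hx.1, hx.2.le⟩, hx0⟩)
  refine ⟨hAfin, hBfin, le_antisymm (key_le f hf hper hmorse) ?_⟩
  -- apply the key inequality to -f
  have hd1 : deriv (fun y => -(f y)) = fun y => -(deriv f y) := funext fun y => deriv.neg
  have hd2 : deriv (deriv (fun y => -(f y))) = fun y => -(deriv (deriv f) y) := by
    rw [hd1]; exact funext fun y => deriv.neg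
  have hkey := key_le (fun y => -(f y)) hf.neg
    (fun x => congrArg Neg.neg (hper x))
    (by intro x hx; rw [hd1] at hx; rw [hd2]
        simpa using hmorse x (by simpa using hx))
  have hd2' : deriv (fun y => -(deriv f y)) = fun y => -(deriv (deriv f) y) :=
    funext fun y => deriv.neg
  rw [hd1, hd2'] at hkey
  have e1 : {x ∈ Set.Ico (0 : ℝ) 1 | (fun y => -(deriv f y)) x = 0 ∧
      (fun y => -(deriv (deriv f) y)) x < 0} =
      {x ∈ Set.Ico (0 : ℝ) 1 | deriv f x = 0 ∧ deriv (deriv f) x > 0} := by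
    ext x; simp only [Set.mem_setOf_eq, neg_eq_zero, neg_lt_zero, gt_iff_lt]
  have e2 : {x ∈ Set.Ico (0 : ℝ) 1 | (fun y => -(deriv f y)) x = 0 ∧
      (fun y => -(deriv (deriv f) y)) x > 0} =
      {x ∈ Set.Ico (0 : ℝ) 1 | deriv f x = 0 ∧ deriv (deriv f) x < 0} := by
    ext x; simp only [Set.mem_setOf_eq, neg_eq_zero, gt_iff_lt, neg_pos]
  rwa [e1, e2] at hkey
end
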